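/- Let φ = (φ_1,…,φ_n) : 𝔹_n → 𝔹_n be holomorphic and suppose C_φ is an isometry on the Bloch space of 𝔹_n. Then: (a) the component functions φ_1,…,φ_n are linearly independent over ℂ; (b) φ(0) = 0; (c) each component φ_j has Bloch seminorm β_{φ_j} = √(2/(n+1)). -/

import Mathlib

open Complex Metric Set

/-- The Bergman metric on the unit ball `𝔹_n ⊆ ℂⁿ`:
`H_z(u,ū) = (n+1)[(1-‖z‖²)‖u‖² + |⟨u,z⟩|²] / (2(1-‖z‖²)²)`. -/
noncomputable def bergmanH (n : ℕ) (z u : EuclideanSpace ℂ (Fin n)) : ℝ :=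
  ((n + 1 : ℝ) * ((1 - ‖z‖ ^ 2) * ‖u‖ ^ 2 + ‖(inner ℂ z u : ℂ)‖ ^ 2)) /
    (2 * (1 - ‖z‖ ^ 2) ^ 2)

/-- `Q_f(z) = sup_{u ≠ 0} |f'(z)u| / H_z(u,ū)^{1/2}`. -/
noncomputable def Qball (n : ℕ) (f : EuclideanSpace ℂ (Fin n) → ℂ)
    (z : EuclideanSpace ℂ (Fin n)) : ℝ :=
  sSup {r : ℝ | ∃ u : EuclideanSpace ℂ (Fin n), u ≠ 0 ∧
    r = ‖fderiv ℂ f z u‖ / Real.sqrt (bergmanH n z u)}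

/-- The set of values `Q_f(z)` for `z ∈ 𝔹_n`. -/
def blochValuesBall (n : ℕ) (f : EuclideanSpace ℂ (Fin n) → ℂ) : Set ℝ :=
  {r : ℝ | ∃ z ∈ ball (0 : EuclideanSpace ℂ (Fin n)) 1, r = Qball n f z}

/-- The Bloch seminorm `β_f = sup_{z ∈ 𝔹_n} Q_f(z)`. -/
noncomputable def blochSemiBall (n : ℕ) (f : EuclideanSpace ℂ (Fin n) → ℂ) : ℝ :=
  sSup (blochValuesBall n f)

/-- `f` is a Bloch function on `𝔹_n`. -/
def IsBlochBall (n : ℕ) (f : EuclideanSpace ℂ (Fin n) → ℂ) : Prop :=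
  DifferentiableOn ℂ f (ball (0 : EuclideanSpace ℂ (Fin n)) 1) ∧
    BddAbove (blochValuesBall n f)

/-- The Bloch norm `‖f‖_B = |f(0)| + β_f`. -/
noncomputable def blochNormBall (n : ℕ) (f : EuclideanSpace ℂ (Fin n) → ℂ) : ℝ :=
  ‖f 0‖ + blochSemiBall n f

/-! ### Auxiliary lemmas -/

/-- `√((n+1)/2)`, the normalizing constant. -/
noncomputable def sK (n : ℕ) : ℝ := Real.sqrt ((n + 1 : ℝ) / 2)

lemma sK_pos (n : ℕ) : 0 < sK n := Real.sqrt_pos.2 (by positivity)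

lemma s_eq (n : ℕ) : Real.sqrt (2 / (n + 1)) = 1 / sK n := by
  have hn : (0:ℝ) < (n:ℝ) + 1 := by positivity
  rw [eq_div_iff (sK_pos n).ne', sK, ← Real.sqrt_mul (by positivity)]
  rw [show (2:ℝ) / ((n:ℝ)+1) * (((n:ℝ)+1)/2) = 1 by field_simp]
  exact Real.sqrt_one

lemma bergman_lower (n : ℕ) (z u : EuclideanSpace ℂ (Fin n)) (hz : ‖z‖ < 1) :
    (((n:ℝ)+1)/2) * ‖u‖^2 ≤ bergmanH n z u := by
  have h1 : 0 < 1 - ‖z‖^2 := by nlinarith [norm_nonneg z]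
  have h2 : (0:ℝ) ≤ ‖z‖^2 := by positivity
  have h3 : (0:ℝ) ≤ ‖(inner ℂ z u : ℂ)‖^2 := by positivity
  have h4 : (0:ℝ) ≤ ‖u‖^2 := by positivity
  have hn : (0:ℝ) < (n:ℝ) + 1 := by positivity
  rw [bergmanH, le_div_iff₀ (by positivity)]
  nlinarith [mul_nonneg hn.le h3, mul_nonneg hn.le (mul_nonneg (mul_nonneg h2 h4) h1.le)]

lemma sqrt_bergman_lower (n : ℕ) (z u : EuclideanSpace ℂ (Fin n)) (hz : ‖z‖ < 1) :
    sK n * ‖u‖ ≤ Real.sqrt (bergmanH n z u) := by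
  have h : sK n * ‖u‖ = Real.sqrt ((((n:ℝ)+1)/2) * ‖u‖^2) := by
    rw [Real.sqrt_mul (by positivity), Real.sqrt_sq (norm_nonneg u)]; rfl
  rw [h]; exact Real.sqrt_le_sqrt (bergman_lower n z u hz)

lemma bergman_zero (n : ℕ) (u : EuclideanSpace ℂ (Fin n)) :
    bergmanH n 0 u = (((n:ℝ)+1)/2) * ‖u‖^2 := by
  rw [bergmanH]
  simp [inner_zero_left]
  ring

lemma sqrt_bergman_zero (n : ℕ) (u : EuclideanSpace ℂ (Fin n)) :
    Real.sqrt (bergmanH n 0 u) = sK n * ‖u‖ := by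
  rw [bergman_zero, Real.sqrt_mul (by positivity), Real.sqrt_sq (norm_nonneg u)]; rfl

lemma ratio_le (n : ℕ) (f : EuclideanSpace ℂ (Fin n) → ℂ) (M : ℝ)
    (z : EuclideanSpace ℂ (Fin n)) (hz : ‖z‖ < 1)
    (hf : ∀ u, ‖fderiv ℂ f z u‖ ≤ M * ‖u‖) :
    ∀ u : EuclideanSpace ℂ (Fin n), u ≠ 0 →
      ‖fderiv ℂ f z u‖ / Real.sqrt (bergmanH n z u) ≤ M * Real.sqrt (2 / (n + 1)) := by
  intro u hu
  have hun : 0 < ‖u‖ := norm_pos_iff.2 hu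
  have hM : 0 ≤ M := by
    have := hf u
    nlinarith [norm_nonneg (fderiv ℂ f z u)]
  have hden : 0 < sK n * ‖u‖ := mul_pos (sK_pos n) hun
  calc ‖fderiv ℂ f z u‖ / Real.sqrt (bergmanH n z u)
      ≤ (M * ‖u‖) / (sK n * ‖u‖) :=
        div_le_div₀ (by positivity) (hf u) hden (sqrt_bergman_lower n z u hz)
    _ = M / sK n := mul_div_mul_right _ _ hun.ne'
    _ = M * Real.sqrt (2 / (n + 1)) := by rw [s_eq, mul_one_div]

lemma Qball_le (n : ℕ) (f : EuclideanSpace ℂ (Fin n) → ℂ) (M : ℝ) (hM : 0 ≤ M)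
    (z : EuclideanSpace ℂ (Fin n)) (hz : ‖z‖ < 1)
    (hf : ∀ u, ‖fderiv ℂ f z u‖ ≤ M * ‖u‖) :
    Qball n f z ≤ M * Real.sqrt (2 / (n + 1)) := by
  apply Real.sSup_le _ (by positivity)
  rintro r ⟨u, hu, rfl⟩
  exact ratio_le n f M z hz hf u hu

lemma Qball_zero_ge (n : ℕ) (f : EuclideanSpace ℂ (Fin n) → ℂ) (M : ℝ)
    (hf : ∀ u, ‖fderiv ℂ f 0 u‖ ≤ M * ‖u‖) (u : EuclideanSpace ℂ (Fin n)) (hu : u ≠ 0) :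
    ‖fderiv ℂ f 0 u‖ / Real.sqrt (bergmanH n 0 u) ≤ Qball n f 0 := by
  refine le_csSup ⟨M * Real.sqrt (2 / (n + 1)), ?_⟩ ⟨u, hu, rfl⟩
  rintro r ⟨v, hv, rfl⟩
  exact ratio_le n f M 0 (by simp) hf v hv

lemma blochValues_bdd (n : ℕ) (f : EuclideanSpace ℂ (Fin n) → ℂ) (M : ℝ) (hM : 0 ≤ M)
    (hf : ∀ z : EuclideanSpace ℂ (Fin n), ‖z‖ < 1 → ∀ u, ‖fderiv ℂ f z u‖ ≤ M * ‖u‖) :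
    ∀ r ∈ blochValuesBall n f, r ≤ M * Real.sqrt (2 / (n + 1)) := by
  rintro r ⟨z, hz, rfl⟩
  exact Qball_le n f M hM z (mem_ball_zero_iff.1 hz) (hf z (mem_ball_zero_iff.1 hz))

lemma blochValues_bddAbove (n : ℕ) (f : EuclideanSpace ℂ (Fin n) → ℂ) (M : ℝ) (hM : 0 ≤ M)
    (hf : ∀ z : EuclideanSpace ℂ (Fin n), ‖z‖ < 1 → ∀ u, ‖fderiv ℂ f z u‖ ≤ M * ‖u‖) :
    BddAbove (blochValuesBall n f) :=
  ⟨M * Real.sqrt (2 / (n + 1)), fun r hr => blochValues_bdd n f M hM hf r hr⟩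

lemma blochSemi_le (n : ℕ) (f : EuclideanSpace ℂ (Fin n) → ℂ) (M : ℝ) (hM : 0 ≤ M)
    (hf : ∀ z : EuclideanSpace ℂ (Fin n), ‖z‖ < 1 → ∀ u, ‖fderiv ℂ f z u‖ ≤ M * ‖u‖) :
    blochSemiBall n f ≤ M * Real.sqrt (2 / (n + 1)) :=
  Real.sSup_le (blochValues_bdd n f M hM hf) (by positivity)

lemma blochSemi_ge_Q0 (n : ℕ) (f : EuclideanSpace ℂ (Fin n) → ℂ)
    (hb : BddAbove (blochValuesBall n f)) :
    Qball n f 0 ≤ blochSemiBall n f :=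
  le_csSup hb ⟨0, mem_ball_self one_pos, rfl⟩

lemma Qball_add_const (n : ℕ) (g : EuclideanSpace ℂ (Fin n) → ℂ) (c : ℂ) :
    Qball n (fun z => g z + c) = Qball n g := by
  funext z; unfold Qball; simp only [fderiv_add_const]

lemma blochSemi_add_const (n : ℕ) (g : EuclideanSpace ℂ (Fin n) → ℂ) (c : ℂ) :
    blochSemiBall n (fun z => g z + c) = blochSemiBall n g := by
  unfold blochSemiBall blochValuesBall; rw [Qball_add_const]

lemma fderiv_inner_const (n : ℕ) (w : EuclideanSpace ℂ (Fin n)) (c : ℂ)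
    (z : EuclideanSpace ℂ (Fin n)) :
    fderiv ℂ (fun z : EuclideanSpace ℂ (Fin n) => (inner ℂ w z : ℂ) + c) z = innerSL ℂ w := by
  rw [fderiv_add_const]
  exact (innerSL ℂ w).fderiv

lemma norm_innerSL_self (n : ℕ) (w : EuclideanSpace ℂ (Fin n)) :
    ‖((innerSL ℂ w) w : ℂ)‖ = ‖w‖^2 := by
  change ‖(inner ℂ w w : ℂ)‖ = _
  rw [inner_self_eq_norm_sq_to_K]
  simp

lemma isBloch_inner_const (n : ℕ) (w : EuclideanSpace ℂ (Fin n)) (c : ℂ) :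
    IsBlochBall n (fun z => (inner ℂ w z : ℂ) + c) := by
  constructor
  · exact (((innerSL ℂ w).differentiable).add_const c).differentiableOn
  · exact blochValues_bddAbove n _ ‖w‖ (norm_nonneg w) (fun z hz u => by
      rw [fderiv_inner_const]; exact norm_inner_le_norm w u)

lemma blochSemi_inner_const (n : ℕ) (w : EuclideanSpace ℂ (Fin n)) (hw : ‖w‖ = 1) (c : ℂ) :
    blochSemiBall n (fun z => (inner ℂ w z : ℂ) + c) = Real.sqrt (2 / (n + 1)) := by
  have hwne : w ≠ 0 := by intro h; rw [h, norm_zero] at hw; norm_num at hw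
  have hbd : ∀ z : EuclideanSpace ℂ (Fin n), ‖z‖ < 1 → ∀ u,
      ‖fderiv ℂ (fun z => (inner ℂ w z : ℂ) + c) z u‖ ≤ 1 * ‖u‖ := by
    intro z hz u
    rw [fderiv_inner_const, one_mul]
    calc ‖(inner ℂ w u : ℂ)‖ ≤ ‖w‖ * ‖u‖ := norm_inner_le_norm w u
      _ = ‖u‖ := by rw [hw, one_mul]
  apply le_antisymm
  · have := blochSemi_le n _ 1 zero_le_one hbd
    simpa using this
  · have h1 := Qball_zero_ge n _ 1 (hbd 0 (by simp)) w hwne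
    have h2 : ‖fderiv ℂ (fun z => (inner ℂ w z : ℂ) + c) 0 w‖ / Real.sqrt (bergmanH n 0 w)
        = Real.sqrt (2 / (n + 1)) := by
      rw [fderiv_inner_const, sqrt_bergman_zero, s_eq, norm_innerSL_self, hw]
      norm_num
    have h3 := blochSemi_ge_Q0 n _ (blochValues_bddAbove n _ 1 zero_le_one hbd)
    calc Real.sqrt (2 / (n + 1)) = _ := h2.symm
      _ ≤ Qball n (fun z => (inner ℂ w z : ℂ) + c) 0 := h1
      _ ≤ _ := h3

/-- Necessary conditions for `C_φ` to be an isometry on the Bloch space of the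
unit ball `𝔹_n`: the components of `φ` are linearly independent over `ℂ`,
`φ(0) = 0`, and each component has Bloch seminorm `√(2/(n+1))`. -/
theorem necessary_conditions_isometry_ball (n : ℕ)
    (φ : EuclideanSpace ℂ (Fin n) → EuclideanSpace ℂ (Fin n))
    (hmap : MapsTo φ (ball (0 : EuclideanSpace ℂ (Fin n)) 1)
      (ball (0 : EuclideanSpace ℂ (Fin n)) 1))
    (hφ : DifferentiableOn ℂ φ (ball (0 : EuclideanSpace ℂ (Fin n)) 1))
    (hiso : ∀ f : EuclideanSpace ℂ (Fin n) → ℂ, IsBlochBall n f →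
      IsBlochBall n (f ∘ φ) ∧ blochNormBall n (f ∘ φ) = blochNormBall n f) :
    (∀ c : Fin n → ℂ,
      (∀ z ∈ ball (0 : EuclideanSpace ℂ (Fin n)) 1, ∑ j, c j * φ z j = 0) →
      ∀ j, c j = 0) ∧
    φ 0 = 0 ∧
    ∀ j : Fin n, blochSemiBall n (fun z => φ z j) = Real.sqrt (2 / (n + 1)) := by
  have h0ball : (0 : EuclideanSpace ℂ (Fin n)) ∈ ball (0 : EuclideanSpace ℂ (Fin n)) 1 :=
    mem_ball_self one_pos
  have key : ∀ j : Fin n, φ 0 j = 0 ∧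
      blochSemiBall n (fun z => φ z j) = Real.sqrt (2 / (n + 1)) := by
    intro j
    set e : EuclideanSpace ℂ (Fin n) := EuclideanSpace.single j 1 with hedef
    have hne : ‖e‖ = 1 := by rw [hedef]; simp
    have hcomp : ∀ c : ℂ, ((fun z => (inner ℂ e z : ℂ) + c) ∘ φ) = fun z => φ z j + c := by
      intro c; funext z
      simp only [Function.comp_apply]
      congr 1
      rw [hedef]
      simp [PiLp.inner_apply, RCLike.inner_apply, EuclideanSpace.single_apply]
    have heq : ∀ c : ℂ, ‖φ 0 j + c‖ + blochSemiBall n (fun z => φ z j)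
        = ‖c‖ + Real.sqrt (2 / (n + 1)) := by
      intro c
      have h := (hiso _ (isBloch_inner_const n e c)).2
      rw [hcomp c] at h
      unfold blochNormBall at h
      rw [blochSemi_add_const n (fun z => φ z j) c] at h
      rw [blochSemi_inner_const n e hne c] at h
      simpa [inner_zero_right] using h
    have h1 := heq 0
    have h2 := heq (-(φ 0 j))
    simp only [add_zero, norm_zero, zero_add, add_neg_cancel, norm_neg] at h1 h2
    have hnn := norm_nonneg (φ 0 j)
    constructor
    · have : ‖φ 0 j‖ = 0 := by linarith
      exact norm_eq_zero.1 this
    · linarith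
  refine ⟨?_, ?_, fun j => (key j).2⟩
  · -- linear independence of components
    intro c hc j
    by_contra hcj
    set w : EuclideanSpace ℂ (Fin n) := WithLp.toLp 2 (fun i => (starRingEnd ℂ) (c i)) with hwdef
    have hwne : w ≠ 0 := by
      intro h
      apply hcj
      have hj : w j = 0 := by rw [h]; rfl
      rw [hwdef] at hj
      simpa using hj
    set f : EuclideanSpace ℂ (Fin n) → ℂ := fun z => (inner ℂ w z : ℂ) + 0 with hfdef
    have hIso := hiso f (isBloch_inner_const n w 0)
    have hzero : ∀ z ∈ ball (0 : EuclideanSpace ℂ (Fin n)) 1, (f ∘ φ) z = 0 := by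
      intro z hz
      have hin : (f ∘ φ) z = ∑ i, c i * φ z i := by
        simp only [Function.comp_apply, hfdef, add_zero, PiLp.inner_apply, RCLike.inner_apply,
          hwdef]
        exact Finset.sum_congr rfl (fun i _ => by simp [mul_comm])
      rw [hin]; exact hc z hz
    have hfd : ∀ z ∈ ball (0 : EuclideanSpace ℂ (Fin n)) 1, fderiv ℂ (f ∘ φ) z = 0 := by
      intro z hz
      have hev : (f ∘ φ) =ᶠ[nhds z] fun _ => (0:ℂ) :=
        Filter.eventuallyEq_of_mem (isOpen_ball.mem_nhds hz) hzero
      rw [hev.fderiv_eq]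
      exact fderiv_const_apply 0
    have hsingle : (EuclideanSpace.single j 1 : EuclideanSpace ℂ (Fin n)) ≠ 0 := by
      intro h
      have := congrArg (fun v => v j) h
      simp [EuclideanSpace.single_apply] at this
    have hQ : ∀ z ∈ ball (0 : EuclideanSpace ℂ (Fin n)) 1, Qball n (f ∘ φ) z = 0 := by
      intro z hz
      have hset : {r : ℝ | ∃ u : EuclideanSpace ℂ (Fin n), u ≠ 0 ∧
          r = ‖fderiv ℂ (f ∘ φ) z u‖ / Real.sqrt (bergmanH n z u)} = {0} := by
        ext r
        simp only [mem_setOf_eq, mem_singleton_iff]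
        constructor
        · rintro ⟨u, hu, rfl⟩
          rw [hfd z hz]; simp
        · rintro rfl
          exact ⟨EuclideanSpace.single j 1, hsingle, by rw [hfd z hz]; simp⟩
      rw [Qball, hset, csSup_singleton]
    have hbv : blochValuesBall n (f ∘ φ) = {0} := by
      ext r
      simp only [blochValuesBall, mem_setOf_eq, mem_singleton_iff]
      constructor
      · rintro ⟨z, hz, rfl⟩; exact hQ z hz
      · rintro rfl; exact ⟨0, h0ball, (hQ 0 h0ball).symm⟩
    have hL : blochNormBall n (f ∘ φ) = 0 := by
      rw [blochNormBall, blochSemiBall, hbv, csSup_singleton, hzero 0 h0ball]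
      simp
    have hbd : ∀ z : EuclideanSpace ℂ (Fin n), ‖z‖ < 1 → ∀ u,
        ‖fderiv ℂ f z u‖ ≤ ‖w‖ * ‖u‖ := by
      intro z hz u
      rw [hfdef, fderiv_inner_const]
      exact norm_inner_le_norm w u
    have hr0 : 0 < ‖fderiv ℂ f 0 w‖ / Real.sqrt (bergmanH n 0 w) := by
      apply div_pos
      · rw [hfdef, fderiv_inner_const, norm_innerSL_self]
        exact pow_pos (norm_pos_iff.2 hwne) 2
      · rw [sqrt_bergman_zero]
        exact mul_pos (sK_pos n) (norm_pos_iff.2 hwne)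
    have hq1 := Qball_zero_ge n f ‖w‖ (hbd 0 (by simp)) w hwne
    have hq2 := blochSemi_ge_Q0 n f (blochValues_bddAbove n f ‖w‖ (norm_nonneg w) hbd)
    have hf0 : f 0 = 0 := by rw [hfdef]; simp
    have hEq := hIso.2
    rw [hL, blochNormBall, hf0] at hEq
    simp only [norm_zero, zero_add] at hEq
    linarith
  · -- φ(0) = 0
    ext j
    exact (key j).1
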